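/- Let λ be a Perron number. Then for every positive integer k, the field ℚ(λ) equals the field ℚ(λᵏ). -/

import Mathlib

open Polynomial

/-- The Galois conjugates of a real algebraic number: the complex roots of its
minimal polynomial over `ℚ`. -/
def galoisConjugates (x : ℝ) : Set ℂ :=
  {z : ℂ | Polynomial.aeval z (minpoly ℚ x) = 0}

/-- A Perron number: a real algebraic integer `l > 1` all of whose Galois conjugates
other than `l` itself have modulus strictly less than `l`. -/
def IsPerron (l : ℝ) : Prop :=
  1 < l ∧ IsIntegral ℤ l ∧
    ∀ z : ℂ, z ∈ galoisConjugates l → z ≠ (l : ℂ) → ‖z‖ < l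

theorem perron_field_powers (l : ℝ) (hl : IsPerron l) :
    ∀ k : ℕ, 0 < k →
      IntermediateField.adjoin ℚ {l} = IntermediateField.adjoin ℚ {l ^ k} := by
  intro k hk
  obtain ⟨hl1, hint, hconj⟩ := hl
  have hl0 : (0:ℝ) < l := lt_trans one_pos hl1
  set K := IntermediateField.adjoin ℚ {l ^ k} with hKdef
  have hlkK : l ^ k ∈ K := IntermediateField.mem_adjoin_simple_self ℚ (l ^ k)
  have hQ : IsIntegral ℚ l := hint.tower_top
  have hKint : IsIntegral K l := hQ.tower_top
  set c : K := ⟨l ^ k, hlkK⟩ with hc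
  -- every complex root of minpoly K l equals l
  have key : ∀ z : ℂ, (Polynomial.aeval z (minpoly K l)) = 0 → z = (l : ℂ) := by
    intro z hz
    -- z is a Galois conjugate of l
    have hconjz : z ∈ galoisConjugates l := by
      obtain ⟨q, hq⟩ := minpoly.dvd_map_of_isScalarTower ℚ K l
      have : Polynomial.aeval z ((minpoly ℚ l).map (algebraMap ℚ K)) = 0 := by
        rw [hq, map_mul, hz, zero_mul]
      rwa [Polynomial.aeval_map_algebraMap] at this
    -- z ^ k = l ^ k
    have hdvd2 : minpoly K l ∣ (X : K[X]) ^ k - C c := by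
      apply minpoly.dvd
      simp only [map_sub, map_pow, Polynomial.aeval_X, Polynomial.aeval_C]
      have : (algebraMap K ℝ) c = l ^ k := rfl
      rw [this, sub_self]
    have hzk : z ^ k = (l : ℂ) ^ k := by
      obtain ⟨q, hq⟩ := hdvd2
      have h0 : Polynomial.aeval z ((X : K[X]) ^ k - C c) = 0 := by
        rw [hq, map_mul, hz, zero_mul]
      simp only [map_sub, map_pow, Polynomial.aeval_X, Polynomial.aeval_C] at h0
      have hcC : (algebraMap K ℂ) c = (l : ℂ) ^ k := by
        rw [IsScalarTower.algebraMap_apply K ℝ ℂ c]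
        show ((l ^ k : ℝ) : ℂ) = _
        push_cast
        ring
      rw [hcC] at h0
      linear_combination h0
    have habs : ‖z‖ = l := by
      have h1 : ‖z‖ ^ k = l ^ k := by
        rw [← norm_pow, hzk, norm_pow, Complex.norm_real, Real.norm_of_nonneg hl0.le]
      exact (pow_left_strictMonoOn₀ hk.ne').injOn (norm_nonneg z) hl0.le h1
    by_contra hne
    exact absurd habs (ne_of_lt (hconj z hconjz hne))
  -- conclude minpoly K l has degree 1
  have hsep : (minpoly K l).Separable := (minpoly.irreducible hKint).separable
  have hsplits : ((minpoly K l).map (algebraMap K ℂ)).Splits := IsAlgClosed.splits _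
  set p := (minpoly K l).map (algebraMap K ℂ) with hp
  have hne0 : minpoly K l ≠ 0 := minpoly.ne_zero hKint
  have hall : ∀ x ∈ p.roots, (l : ℂ) = x := by
    intro x hx
    rw [hp, Polynomial.mem_roots_map hne0] at hx
    exact (key x hx).symm
  have hnodup : p.roots.Nodup := Polynomial.nodup_roots (hsep.map)
  have hcard1 : p.roots.card ≤ 1 := by
    rw [← Multiset.count_eq_card.mpr hall]
    exact Multiset.nodup_iff_count_le_one.mp hnodup (l : ℂ)
  have hdeg : (minpoly K l).natDegree = 1 := by
    have h := hsplits.natDegree_eq_card_roots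
    rw [hp, Polynomial.natDegree_map] at h
    rw [← hp] at h
    have hpos := minpoly.natDegree_pos hKint
    omega
  have hdeg' : (minpoly K l).degree = 1 := by
    rw [Polynomial.degree_eq_natDegree hne0, hdeg]
    rfl
  obtain ⟨y, hy⟩ := minpoly.degree_eq_one_iff.mp hdeg'
  have hlK : l ∈ K := hy ▸ y.2
  apply le_antisymm
  · exact IntermediateField.adjoin_simple_le_iff.mpr hlK
  · exact IntermediateField.adjoin_simple_le_iff.mpr
      (pow_mem (IntermediateField.mem_adjoin_simple_self ℚ l) k)
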